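/- Let G be an n-resource selection game (with nondecreasing, not necessarily continuous, cost functions). For every resource j ∈ {1,…,n} and every two Nash equilibria s and s' of G, the costs coincide: h_j^s = h_j^{s'}. -/

import Mathlib

open scoped NNReal

namespace RSG

/-- A consumption profile in an `n`-resource selection game: each nonempty type
`R ⊆ [n]` distributes its mass `μ R` among the resources in `R`. -/
def IsProfile (n : ℕ) (μ : Finset (Fin n) → ℝ≥0) (s : Finset (Fin n) → Fin n → ℝ≥0) : Prop :=
  (∀ R : Finset (Fin n), ∀ j : Fin n, j ∉ R → s R j = 0) ∧
  (∀ R : Finset (Fin n), R.Nonempty → ∑ j ∈ R, s R j = μ R)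

/-- The load on resource `j` in profile `s`. -/
def load (n : ℕ) (s : Finset (Fin n) → Fin n → ℝ≥0) (j : Fin n) : ℝ≥0 :=
  ∑ R : Finset (Fin n), s R j

/-- The cost of resource `j` in profile `s`. -/
def cost (n : ℕ) (f : Fin n → ℝ≥0 → ℝ) (s : Finset (Fin n) → Fin n → ℝ≥0) (j : Fin n) : ℝ :=
  f j (load n s j)

/-- A Nash equilibrium. -/
def IsNash (n : ℕ) (f : Fin n → ℝ≥0 → ℝ) (μ : Finset (Fin n) → ℝ≥0)
    (s : Finset (Fin n) → Fin n → ℝ≥0) : Prop :=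
  IsProfile n μ s ∧
  ∀ R : Finset (Fin n), ∀ k ∈ R, 0 < s R k → ∀ j ∈ R, cost n f s k ≤ cost n f s j

/-- A strong Nash equilibrium: a Nash equilibrium `s` such that there is no
consumption profile `s' ≠ s` in which every player who strictly increases its
consumption of some resource `k` (i.e. `s' R k > s R k`) pays, at `k` in `s'`,
strictly less than the common equilibrium cost `h^R` of its type
(expressed via: less than `cost s j` for every `j` in the support of `s R`). -/
def IsStrong (n : ℕ) (f : Fin n → ℝ≥0 → ℝ) (μ : Finset (Fin n) → ℝ≥0)
    (s : Finset (Fin n) → Fin n → ℝ≥0) : Prop :=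
  IsNash n f μ s ∧
  ¬ ∃ s' : Finset (Fin n) → Fin n → ℝ≥0, IsProfile n μ s' ∧ s' ≠ s ∧
    ∀ R : Finset (Fin n), ∀ k : Fin n, s R k < s' R k →
      ∀ j : Fin n, 0 < s R j → cost n f s' k < cost n f s j

end RSG


open RSG

private lemma perR_ineq (n : ℕ) (f : Fin n → ℝ≥0 → ℝ) (μ : Finset (Fin n) → ℝ≥0)
    (s t : Finset (Fin n) → Fin n → ℝ≥0)
    (hs : IsNash n f μ s) (ht : IsProfile n μ t) (R : Finset (Fin n)) :
    ∑ j ∈ R, cost n f s j * (s R j : ℝ) ≤ ∑ j ∈ R, cost n f s j * (t R j : ℝ) := by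
  rcases R.eq_empty_or_nonempty with rfl | hR
  · simp
  rcases eq_or_lt_of_le (zero_le : (0:ℝ≥0) ≤ μ R) with hμ | hμ
  · have hsz : ∀ j ∈ R, s R j = 0 := by
      intro j hj
      have h0 : ∑ j ∈ R, s R j = 0 := by rw [hs.1.2 R hR, ← hμ]
      exact (Finset.sum_eq_zero_iff.mp h0) j hj
    have htz : ∀ j ∈ R, t R j = 0 := by
      intro j hj
      have h0 : ∑ j ∈ R, t R j = 0 := by rw [ht.2 R hR, ← hμ]
      exact (Finset.sum_eq_zero_iff.mp h0) j hj
    have e1 : ∑ j ∈ R, cost n f s j * (s R j : ℝ) = 0 :=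
      Finset.sum_eq_zero (fun j hj => by rw [hsz j hj]; simp)
    have e2 : ∑ j ∈ R, cost n f s j * (t R j : ℝ) = 0 :=
      Finset.sum_eq_zero (fun j hj => by rw [htz j hj]; simp)
    rw [e1, e2]
  · obtain ⟨k, hk, hks⟩ : ∃ k ∈ R, 0 < s R k := by
      by_contra h
      push_neg at h
      have h0 : ∑ j ∈ R, s R j = 0 :=
        Finset.sum_eq_zero (fun j hj => le_antisymm (h j hj) zero_le)
      rw [hs.1.2 R hR] at h0
      exact absurd h0 (ne_of_gt hμ)
    have hmin : ∀ j ∈ R, cost n f s k ≤ cost n f s j := hs.2 R k hk hks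
    have hL : ∑ j ∈ R, cost n f s j * (s R j : ℝ) = cost n f s k * (μ R : ℝ) := by
      have heq : ∀ j ∈ R, cost n f s j * (s R j : ℝ) = cost n f s k * (s R j : ℝ) := by
        intro j hj
        rcases eq_or_lt_of_le (zero_le : (0:ℝ≥0) ≤ s R j) with hz | hz
        · rw [← hz]; simp
        · rw [le_antisymm (hs.2 R j hj hz k hk) (hmin j hj)]
      rw [Finset.sum_congr rfl heq, ← Finset.mul_sum]
      congr 1
      rw [← NNReal.coe_sum, hs.1.2 R hR]
    rw [hL]
    calc cost n f s k * (μ R : ℝ) = ∑ j ∈ R, cost n f s k * (t R j : ℝ) := by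
          rw [← Finset.mul_sum, ← NNReal.coe_sum, ht.2 R hR]
      _ ≤ _ := Finset.sum_le_sum
          (fun j hj => mul_le_mul_of_nonneg_right (hmin j hj) (t R j).coe_nonneg)

private lemma var_ineq (n : ℕ) (f : Fin n → ℝ≥0 → ℝ) (μ : Finset (Fin n) → ℝ≥0)
    (s t : Finset (Fin n) → Fin n → ℝ≥0)
    (hs : IsNash n f μ s) (ht : IsProfile n μ t) :
    ∑ j : Fin n, cost n f s j * (load n s j : ℝ)
      ≤ ∑ j : Fin n, cost n f s j * (load n t j : ℝ) := by
  have key : ∀ (u : Finset (Fin n) → Fin n → ℝ≥0), IsProfile n μ u →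
      ∑ j : Fin n, cost n f s j * (load n u j : ℝ)
        = ∑ R : Finset (Fin n), ∑ j ∈ R, cost n f s j * (u R j : ℝ) := by
    intro u hu
    simp only [load, NNReal.coe_sum, Finset.mul_sum]
    rw [Finset.sum_comm]
    refine Finset.sum_congr rfl (fun R _ => ?_)
    refine (Finset.sum_subset (Finset.subset_univ R) ?_).symm
    intro j _ hj
    rw [hu.1 R j hj]; simp
  rw [key s hs.1, key t ht]
  exact Finset.sum_le_sum (fun R _ => perR_ineq n f μ s t hs ht R)


/-- In every `n`-resource selection game (nondecreasing, not
necessarily continuous, cost functions), the cost of each resource is the same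
in all Nash equilibria. -/
theorem nash_cost_unique (n : ℕ) (f : Fin n → ℝ≥0 → ℝ)
    (μ : Finset (Fin n) → ℝ≥0) (hmono : ∀ j, Monotone (f j))
    (s s' : Finset (Fin n) → Fin n → ℝ≥0)
    (hs : IsNash n f μ s) (hs' : IsNash n f μ s') (j : Fin n) :
    cost n f s j = cost n f s' j := by
  have h1 := var_ineq n f μ s s' hs hs'.1
  have h2 := var_ineq n f μ s' s hs' hs.1
  set g : Fin n → ℝ := fun j =>
    (cost n f s j - cost n f s' j) * ((load n s' j : ℝ) - (load n s j : ℝ)) with hg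
  have hsum : 0 ≤ ∑ i, g i := by
    have hexp : ∑ i, g i =
        (∑ i, cost n f s i * (load n s' i : ℝ) - ∑ i, cost n f s i * (load n s i : ℝ))
        + (∑ i, cost n f s' i * (load n s i : ℝ) - ∑ i, cost n f s' i * (load n s' i : ℝ)) := by
      rw [← Finset.sum_sub_distrib, ← Finset.sum_sub_distrib, ← Finset.sum_add_distrib]
      exact Finset.sum_congr rfl (fun i _ => by simp [hg]; ring)
    rw [hexp]; linarith
  have hterm : ∀ i ∈ Finset.univ, g i ≤ 0 := by
    intro i _
    rcases le_total (load n s i) (load n s' i) with h | h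
    · have hc : cost n f s i ≤ cost n f s' i := hmono i h
      have hl : (load n s i : ℝ) ≤ (load n s' i : ℝ) := NNReal.coe_le_coe.mpr h
      simp only [hg]; nlinarith
    · have hc : cost n f s' i ≤ cost n f s i := hmono i h
      have hl : (load n s' i : ℝ) ≤ (load n s i : ℝ) := NNReal.coe_le_coe.mpr h
      simp only [hg]; nlinarith
  have hzero : g j = 0 := by
    have h0 : ∑ i, g i = 0 :=
      le_antisymm (Finset.sum_nonpos hterm) hsum
    exact (Finset.sum_eq_zero_iff_of_nonpos hterm).mp h0 j (Finset.mem_univ j)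
  simp only [hg] at hzero
  rcases mul_eq_zero.mp hzero with h | h
  · linarith [sub_eq_zero.mp h]
  · have : load n s' j = load n s j := by
      exact_mod_cast sub_eq_zero.mp h
    simp [cost, this]
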